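/- arXiv:2201.04500 — 3 statements merged into one kernel-verified Lean document; each statement's English description precedes it below -/
import Mathlib

section
/- Let μ > 0 and let u ∈ H¹(ℝ³) with ‖u‖_{L²}² = a. Then E_μ(u) ≥ (1/2)(1 − (a/‖Q‖_{L²}²)^{2/3} − 2 μ C* a) ‖∇u‖_{L²}². In particular, if (a/‖Q‖_{L²}²)^{2/3} + 2 μ C* a < 1 then E_μ(u) ≥ 0. -/
open MeasureTheory

noncomputable section

abbrev E3 : Type := EuclideanSpace ℝ (Fin 3)

/-- The nonlocal potential `A(f)(x) = ∫ f(y)/|x-y|² dy`. -/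
def Afun (f : E3 → ℝ) (x : E3) : ℝ := ∫ y : E3, f y / ‖x - y‖ ^ 2

/-- Hartree-type double integral for real-valued functions. -/
def hartreeR (u : E3 → ℝ) : ℝ := ∫ x : E3, ∫ y : E3, (u x) ^ 2 * (u y) ^ 2 / ‖x - y‖ ^ 2

/-- Hartree-type double integral for complex-valued functions. -/
def hartreeC (u : E3 → ℂ) : ℝ := ∫ x : E3, ∫ y : E3, ‖u x‖ ^ 2 * ‖u y‖ ^ 2 / ‖x - y‖ ^ 2

def gradSqC (u : E3 → ℂ) : ℝ := ∫ x : E3, ‖fderiv ℝ u x‖ ^ 2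
def gradSqR (u : E3 → ℝ) : ℝ := ∫ x : E3, ‖fderiv ℝ u x‖ ^ 2

/-- Membership in `H¹(ℝ³, ℂ)`. -/
def H1C (u : E3 → ℂ) : Prop :=
  MemLp u 2 volume ∧ Differentiable ℝ u ∧ MemLp (fun x => fderiv ℝ u x) 2 volume

/-- Membership in `H¹(ℝ³, ℝ)`. -/
def H1R (u : E3 → ℝ) : Prop :=
  MemLp u 2 volume ∧ Differentiable ℝ u ∧ MemLp (fun x => fderiv ℝ u x) 2 volume

/-- Membership in `H²(ℝ³, ℝ)`. -/
def H2R (u : E3 → ℝ) : Prop :=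
  ContDiff ℝ 2 u ∧ MemLp u 2 volume ∧ MemLp (fun x => fderiv ℝ u x) 2 volume ∧
    MemLp (fun x => iteratedFDeriv ℝ 2 u x) 2 volume

def energyC (μ : ℝ) (u : E3 → ℂ) : ℝ :=
  (1 / 2) * gradSqC u - (3 / 10) * (∫ x : E3, ‖u x‖ ^ ((10 : ℝ) / 3)) - (μ / 4) * hartreeC u

def energyR (μ : ℝ) (u : E3 → ℝ) : ℝ :=
  (1 / 2) * gradSqR u - (3 / 10) * (∫ x : E3, |u x| ^ ((10 : ℝ) / 3)) - (μ / 4) * hartreeR u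

def eVec (i : Fin 3) : E3 := EuclideanSpace.single i (1 : ℝ)

/-- Partial derivative `∂ᵢ f`. -/
def pderiv3 (i : Fin 3) (f : E3 → ℝ) (x : E3) : ℝ := fderiv ℝ f x (eVec i)

/-- Laplacian, as the trace of the second derivative. -/
def lap (f : E3 → ℝ) (x : E3) : ℝ :=
  ∑ i : Fin 3, fderiv ℝ (fun y => fderiv ℝ f y (eVec i)) x (eVec i)

/-- Scaling generator `Λf = (3/2) f + x · ∇f`. -/
def scalOp (f : E3 → ℝ) (x : E3) : ℝ := (3 / 2) * f x + fderiv ℝ f x x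

def IsRadial (f : E3 → ℝ) : Prop := ∀ x y : E3, ‖x‖ = ‖y‖ → f x = f y

/-- Decay (with derivatives up to second order) like `e^{-|x|}/|x|`. -/
def decayLike (f : E3 → ℝ) : Prop :=
  ∃ C > 0, ∀ x : E3, 1 ≤ ‖x‖ →
    |f x| ≤ C * Real.exp (-‖x‖) / ‖x‖ ∧
    ‖fderiv ℝ f x‖ ≤ C * Real.exp (-‖x‖) / ‖x‖ ∧
    ‖iteratedFDeriv ℝ 2 f x‖ ≤ C * Real.exp (-‖x‖) / ‖x‖

def L2normR (f : E3 → ℝ) : ℝ := Real.sqrt (∫ x : E3, (f x) ^ 2)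

def H2normR (f : E3 → ℝ) : ℝ :=
  Real.sqrt ((∫ x : E3, (f x) ^ 2) + (∫ x : E3, ‖fderiv ℝ f x‖ ^ 2) +
    ∫ x : E3, ‖iteratedFDeriv ℝ 2 f x‖ ^ 2)

/-- The linearized operator `L₋`. -/
def Lm (μ : ℝ) (Qm : E3 → ℝ) (ξ : E3 → ℝ) (x : E3) : ℝ :=
  - lap ξ x + ξ x - Qm x ^ ((4 : ℝ) / 3) * ξ x - μ * Afun (fun y => (Qm y) ^ 2) x * ξ x

/-- The linearized operator `L₊`. -/
def Lp (μ : ℝ) (Qm : E3 → ℝ) (ξ : E3 → ℝ) (x : E3) : ℝ :=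
  - lap ξ x + ξ x - (7 / 3) * Qm x ^ ((4 : ℝ) / 3) * ξ x
    - 2 * μ * Afun (fun y => Qm y * ξ y) x * Qm x
    - μ * Afun (fun y => (Qm y) ^ 2) x * ξ x

/-- A ground state `Q_μ`: smooth, positive, radial, exponentially decaying solution of
`-ΔQ_μ + Q_μ = Q_μ^{7/3} + μ A(Q_μ²) Q_μ`. -/
def groundState (μ : ℝ) (Qm : E3 → ℝ) : Prop :=
  ContDiff ℝ (⊤ : ℕ∞) Qm ∧ (∀ x, 0 < Qm x) ∧ IsRadial Qm ∧ decayLike Qm ∧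
    ∀ x, - lap Qm x + Qm x = Qm x ^ ((7 : ℝ) / 3) + μ * Afun (fun y => (Qm y) ^ 2) x * Qm x

/-- The mass-critical ground state `Q`: smooth, positive, radial, radially nonincreasing,
exponentially decaying solution of `-ΔQ + Q = Q^{7/3}`. -/
def isQ (Q : E3 → ℝ) : Prop :=
  ContDiff ℝ (⊤ : ℕ∞) Q ∧ (∀ x, 0 < Q x) ∧ IsRadial Q ∧ decayLike Q ∧
    (∀ x y : E3, ‖x‖ ≤ ‖y‖ → Q y ≤ Q x) ∧
    (∀ x, - lap Q x + Q x = Q x ^ ((7 : ℝ) / 3))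

/-- Energy lower bound: for `μ > 0` and `u ∈ H¹(ℝ³)` with `‖u‖_{L²}² = a`,
`E_μ(u) ≥ (1/2)(1 - (a/‖Q‖_{L²}²)^{2/3} - 2μC*a)‖∇u‖_{L²}²`; in particular if
`(a/‖Q‖_{L²}²)^{2/3} + 2μC*a < 1` then `E_μ(u) ≥ 0`. -/
theorem energy_lower_bound (μ a Cstar : ℝ) (Q : E3 → ℝ) (u : E3 → ℂ)
    (hμ : 0 < μ) (hQ : isQ Q)
    (hGN : ∀ v : E3 → ℂ, H1C v →
      (∫ x : E3, ‖v x‖ ^ ((10 : ℝ) / 3)) ≤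
        (5 / 3) * (∫ x : E3, (Q x) ^ 2) ^ (-(2 : ℝ) / 3) *
          (∫ x : E3, ‖v x‖ ^ 2) ^ ((2 : ℝ) / 3) * gradSqC v)
    (hCstar : ∀ v : E3 → ℂ, H1C v →
      hartreeC v ≤ Cstar * gradSqC v * (∫ x : E3, ‖v x‖ ^ 2))
    (hu : H1C u) (ha : (∫ x : E3, ‖u x‖ ^ 2) = a) :
    (1 / 2) * (1 - (a / (∫ x : E3, (Q x) ^ 2)) ^ ((2 : ℝ) / 3) - 2 * μ * Cstar * a) * gradSqC u
        ≤ energyC μ u ∧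
      ((a / (∫ x : E3, (Q x) ^ 2)) ^ ((2 : ℝ) / 3) + 2 * μ * Cstar * a < 1 →
        0 ≤ energyC μ u) := by
  have hG : 0 ≤ gradSqC u := integral_nonneg fun x => by positivity
  have hI0 : 0 ≤ ∫ x : E3, ‖u x‖ ^ ((10 : ℝ) / 3) :=
    integral_nonneg fun x => Real.rpow_nonneg (norm_nonneg _) _
  have hH0 : 0 ≤ hartreeC u :=
    integral_nonneg fun x => integral_nonneg fun y => by positivity
  have ha0 : 0 ≤ a := ha ▸ integral_nonneg fun x => by positivity
  have hb0 : 0 ≤ ∫ x : E3, (Q x) ^ 2 := integral_nonneg fun x => sq_nonneg _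
  set b := ∫ x : E3, (Q x) ^ 2 with hbdef
  set G := gradSqC u with hGdef
  have hGN' := hGN u hu
  have hC' := hCstar u hu
  rw [ha] at hGN' hC'
  have hdiv : (a / b) ^ ((2 : ℝ) / 3) = a ^ ((2 : ℝ) / 3) * b ^ (-(2 : ℝ) / 3) := by
    rw [Real.div_rpow ha0 hb0, neg_div, Real.rpow_neg hb0, div_eq_mul_inv]
  have hIb : (3 / 10) * (∫ x : E3, ‖u x‖ ^ ((10 : ℝ) / 3))
      ≤ (1 / 2) * ((a / b) ^ ((2 : ℝ) / 3)) * G := by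
    have := mul_le_mul_of_nonneg_left hGN' (by norm_num : (0 : ℝ) ≤ 3 / 10)
    calc (3 / 10) * (∫ x : E3, ‖u x‖ ^ ((10 : ℝ) / 3))
        ≤ (3 / 10) * ((5 / 3) * b ^ (-(2 : ℝ) / 3) * a ^ ((2 : ℝ) / 3) * G) := this
      _ = (1 / 2) * ((a / b) ^ ((2 : ℝ) / 3)) * G := by rw [hdiv]; ring
  have hCGa : 0 ≤ Cstar * G * a := le_trans hH0 hC'
  have hHb : (μ / 4) * hartreeC u ≤ μ * Cstar * a * G := by
    nlinarith [mul_le_mul_of_nonneg_left hC' (le_of_lt hμ)]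
  have hmain : (1 / 2) * (1 - (a / b) ^ ((2 : ℝ) / 3) - 2 * μ * Cstar * a) * G
      ≤ energyC μ u := by
    unfold energyC
    rw [← hGdef]
    nlinarith [hIb, hHb]
  refine ⟨hmain, fun h => le_trans ?_ hmain⟩
  have h1 : 0 ≤ 1 - (a / b) ^ ((2 : ℝ) / 3) - 2 * μ * Cstar * a := by linarith
  positivity

end
end

section
/- The kernel of L_{−,μ} is spanned by Q_μ: if ξ ∈ H²(ℝ³) is real-valued and satisfies −Δξ + ξ − Q_μ^{4/3}ξ − μ A(Q_μ²) ξ = 0 almost everywhere on ℝ³, then ξ = c Q_μ for some constant c ∈ ℝ. -/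
open MeasureTheory

noncomputable section

/-- `X i = Q ∂ᵢξ - ξ ∂ᵢQ`. -/
def Xf (Q ξ : E3 → ℝ) (i : Fin 3) (x : E3) : ℝ :=
  Q x * pderiv3 i ξ x - ξ x * pderiv3 i Q x

lemma contDiff_pd {f : E3 → ℝ} (hf : ContDiff ℝ 2 f) (i : Fin 3) :
    ContDiff ℝ 1 (pderiv3 i f) :=
  (hf.fderiv_right (m := 1) (by norm_num)).clm_apply contDiff_const

variable {Q ξ : E3 → ℝ}

lemma Xf_contDiff (hQ : ContDiff ℝ 2 Q) (hξ : ContDiff ℝ 2 ξ) (i : Fin 3) :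
    ContDiff ℝ 1 (Xf Q ξ i) :=
  ((hQ.of_le one_le_two).mul (contDiff_pd hξ i)).sub
    ((hξ.of_le one_le_two).mul (contDiff_pd hQ i))

lemma w_contDiff (hQ : ContDiff ℝ 2 Q) (hξ : ContDiff ℝ 2 ξ) (hQpos : ∀ x, 0 < Q x) :
    ContDiff ℝ 1 (fun y => ξ y / Q y) :=
  (hξ.of_le one_le_two).div (hQ.of_le one_le_two) (fun y => (hQpos y).ne')

lemma pd_w (hQ : ContDiff ℝ 2 Q) (hξ : ContDiff ℝ 2 ξ) (hQpos : ∀ x, 0 < Q x)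
    (i : Fin 3) (x : E3) :
    fderiv ℝ (fun y => ξ y / Q y) x (eVec i) = Xf Q ξ i x / Q x ^ 2 := by
  have hQne : Q x ≠ 0 := (hQpos x).ne'
  have hw : HasFDerivAt (fun y => ξ y / Q y) (fderiv ℝ (fun y => ξ y / Q y) x) x :=
    (((w_contDiff hQ hξ hQpos).differentiable one_ne_zero) x).hasFDerivAt
  have hQx : HasFDerivAt Q (fderiv ℝ Q x) x :=
    ((hQ.differentiable two_ne_zero) x).hasFDerivAt
  have key : HasFDerivAt ξ
      ((ξ x / Q x) • fderiv ℝ Q x + Q x • fderiv ℝ (fun y => ξ y / Q y) x) x := by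
    have h := hw.mul hQx
    apply h.congr_of_eventuallyEq
    filter_upwards with y
    show ξ y = ξ y / Q y * Q y
    rw [div_mul_cancel₀ _ (hQpos y).ne']
  have hfd : fderiv ℝ ξ x = (ξ x / Q x) • fderiv ℝ Q x
      + Q x • fderiv ℝ (fun y => ξ y / Q y) x := key.fderiv
  have heq : fderiv ℝ ξ x (eVec i) = (ξ x / Q x) * fderiv ℝ Q x (eVec i)
      + Q x * fderiv ℝ (fun y => ξ y / Q y) x (eVec i) := by
    rw [hfd]; simp [smul_eq_mul]
  rw [Xf, pderiv3, pderiv3, eq_div_iff (pow_ne_zero 2 hQne)]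
  field_simp at heq
  nlinarith [heq]

lemma pd_g_eq (hQ : ContDiff ℝ 2 Q) (hξ : ContDiff ℝ 2 ξ) (hQpos : ∀ x, 0 < Q x)
    {c : E3 → ℝ} (hc : ContDiff ℝ 2 c) (i : Fin 3) (x : E3) :
    fderiv ℝ (fun y => c y * c y * (ξ y / Q y) * Xf Q ξ i y) x (eVec i)
      = (c x * Xf Q ξ i x / Q x) ^ 2
        + 2 * (c x * Xf Q ξ i x / Q x) * (ξ x * fderiv ℝ c x (eVec i))
        + c x * c x * (ξ x / Q x)
          * (Q x * fderiv ℝ (pderiv3 i ξ) x (eVec i)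
             - ξ x * fderiv ℝ (pderiv3 i Q) x (eVec i)) := by
  have hQne : Q x ≠ 0 := (hQpos x).ne'
  have hcx : HasFDerivAt c (fderiv ℝ c x) x := ((hc.differentiable two_ne_zero) x).hasFDerivAt
  have hQx : HasFDerivAt Q (fderiv ℝ Q x) x := ((hQ.differentiable two_ne_zero) x).hasFDerivAt
  have hξx : HasFDerivAt ξ (fderiv ℝ ξ x) x := ((hξ.differentiable two_ne_zero) x).hasFDerivAt
  have hw : HasFDerivAt (fun y => ξ y / Q y) (fderiv ℝ (fun y => ξ y / Q y) x) x :=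
    (((w_contDiff hQ hξ hQpos).differentiable one_ne_zero) x).hasFDerivAt
  have hdξ : HasFDerivAt (pderiv3 i ξ) (fderiv ℝ (pderiv3 i ξ) x) x :=
    (((contDiff_pd hξ i).differentiable one_ne_zero) x).hasFDerivAt
  have hdQ : HasFDerivAt (pderiv3 i Q) (fderiv ℝ (pderiv3 i Q) x) x :=
    (((contDiff_pd hQ i).differentiable one_ne_zero) x).hasFDerivAt
  have hX : HasFDerivAt (Xf Q ξ i)
      ((Q x • fderiv ℝ (pderiv3 i ξ) x + pderiv3 i ξ x • fderiv ℝ Q x)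
        - (ξ x • fderiv ℝ (pderiv3 i Q) x + pderiv3 i Q x • fderiv ℝ ξ x)) x :=
    (hQx.mul hdξ).sub (hξx.mul hdQ)
  have hcc : HasFDerivAt (fun y => c y * c y)
      (c x • fderiv ℝ c x + c x • fderiv ℝ c x) x := hcx.mul hcx
  have hccw : HasFDerivAt (fun y => c y * c y * (ξ y / Q y))
      ((c x * c x) • fderiv ℝ (fun y => ξ y / Q y) x
        + (ξ x / Q x) • (c x • fderiv ℝ c x + c x • fderiv ℝ c x)) x := hcc.mul hw
  have hfull := hccw.mul hX
  rw [show (fun y => c y * c y * (ξ y / Q y) * Xf Q ξ i y)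
      = (fun y => c y * c y * (ξ y / Q y)) * Xf Q ξ i from rfl, hfull.fderiv]
  simp only [ContinuousLinearMap.add_apply, ContinuousLinearMap.smul_apply,
    ContinuousLinearMap.sub_apply, smul_eq_mul, pd_w hQ hξ hQpos i x]
  have hXv : Xf Q ξ i x = Q x * pderiv3 i ξ x - ξ x * pderiv3 i Q x := rfl
  have hpξ : pderiv3 i ξ x = fderiv ℝ ξ x (eVec i) := rfl
  have hpQ : pderiv3 i Q x = fderiv ℝ Q x (eVec i) := rfl
  field_simp
  ring_nf
  rw [hXv, hpξ, hpQ]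
  ring


lemma integral_pderiv_eq_zero {h : E3 → ℝ} (h1 : ContDiff ℝ 1 h)
    (hc : HasCompactSupport h) (v : E3) : ∫ x : E3, fderiv ℝ h x v = 0 := by
  obtain ⟨r, hr⟩ : ∃ r : ℝ, tsupport h ⊆ Metric.closedBall 0 r :=
    hc.isBounded.subset_closedBall 0
  obtain ⟨R, hRpos, hRr⟩ : ∃ R : ℝ, 0 < R ∧ r < R :=
    ⟨max r 0 + 1, by positivity, by have := le_max_left r 0; linarith⟩
  have hsub : tsupport h ⊆ Metric.ball (0 : E3) R := by
    refine hr.trans ?_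
    intro x hx
    simp only [Metric.mem_closedBall, Metric.mem_ball] at *
    linarith
  set χ : ContDiffBump (0 : E3) := ⟨R, R + 1, hRpos, by linarith⟩ with hχ
  have hχd : Differentiable ℝ (fun x => χ x) := (χ.contDiff (n := 1)).differentiable one_ne_zero
  have hχc : Continuous (fun x => χ x) := χ.continuous
  have hDχ : Continuous (fun x => fderiv ℝ (fun y => χ y) x v) :=
    ((χ.contDiff (n := 1)).continuous_fderiv one_ne_zero).clm_apply continuous_const
  have hDh : Continuous (fun x => fderiv ℝ h x v) :=
    (h1.continuous_fderiv one_ne_zero).clm_apply continuous_const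
  have hDhcs : HasCompactSupport (fun x => fderiv ℝ h x v) := hc.fderiv_apply ℝ v
  have I1 : Integrable (fun x => fderiv ℝ (fun y => χ y) x v * h x) volume :=
    (hDχ.mul h1.continuous).integrable_of_hasCompactSupport (hc.mul_left)
  have I2 : Integrable (fun x => χ x * fderiv ℝ h x v) volume :=
    (hχc.mul hDh).integrable_of_hasCompactSupport (hDhcs.mul_left)
  have I3 : Integrable (fun x => χ x * h x) volume :=
    (hχc.mul h1.continuous).integrable_of_hasCompactSupport (hc.mul_left)
  have key := integral_mul_fderiv_eq_neg_fderiv_mul_of_integrable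
    (f := fun x => χ x) (g := h) (v := v) I1 I2 I3 (fun x _ => hχd x) (fun x _ => (h1.differentiable one_ne_zero) x)
  have e1 : ∀ x : E3, χ x * fderiv ℝ h x v = fderiv ℝ h x v := by
    intro x
    by_cases hx : x ∈ tsupport h
    · rw [χ.one_of_mem_closedBall (Metric.ball_subset_closedBall (hsub hx))]
      ring
    · rw [fderiv_of_notMem_tsupport (𝕜 := ℝ) hx]; simp
  have e2 : ∀ x : E3, fderiv ℝ (fun y => χ y) x v * h x = 0 := by
    intro x
    by_cases hx : x ∈ Metric.ball (0 : E3) R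
    · have : (fun y => χ y) =ᶠ[nhds x] fun _ => 1 := by
        filter_upwards [Metric.isOpen_ball.mem_nhds hx] with y hy
        exact χ.one_of_mem_closedBall (Metric.ball_subset_closedBall hy)
      rw [this.fderiv_eq, fderiv_const_apply]
      simp
    · have : h x = 0 := image_eq_zero_of_notMem_tsupport (fun hh => hx (hsub hh))
      rw [this, mul_zero]
  rw [← integral_congr_ae (Filter.Eventually.of_forall e1), key]
  simp [e2]


lemma smoothTransition_deriv_bound :
    ∃ M : ℝ, 0 < M ∧ ∀ t : ℝ, |deriv Real.smoothTransition t| ≤ M := by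
  have hcd : Continuous (deriv Real.smoothTransition) :=
    (Real.smoothTransition.contDiff (n := 1)).continuous_deriv le_rfl
  have hz : ∀ t : ℝ, t ∉ Set.Icc (0:ℝ) 1 → deriv Real.smoothTransition t = 0 := by
    intro t ht
    simp only [Set.mem_Icc, not_and_or, not_le] at ht
    rcases ht with ht | ht
    · have : Real.smoothTransition =ᶠ[nhds t] fun _ => 0 := by
        filter_upwards [Iio_mem_nhds ht] with y hy
        exact Real.smoothTransition.zero_of_nonpos (le_of_lt hy)
      rw [this.deriv_eq]; simp
    · have : Real.smoothTransition =ᶠ[nhds t] fun _ => 1 := by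
        filter_upwards [Ioi_mem_nhds ht] with y hy
        exact Real.smoothTransition.one_of_one_le (le_of_lt hy)
      rw [this.deriv_eq]; simp
  have hcs : HasCompactSupport (deriv Real.smoothTransition) :=
    HasCompactSupport.intro isCompact_Icc hz
  have hb : BddAbove (Set.range fun t => |deriv Real.smoothTransition t|) :=
    (hcd.abs).bddAbove_range_of_hasCompactSupport (hcs.abs)
  obtain ⟨M, hM⟩ := hb
  refine ⟨M + 1, ?_, fun t => ?_⟩
  · have h0 : (0:ℝ) ≤ M := le_trans (abs_nonneg _) (hM (Set.mem_range_self (0:ℝ)))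
    linarith
  · have := hM (Set.mem_range_self t); simp at this ⊢; linarith

def cutoff (R : ℝ) (x : E3) : ℝ := Real.smoothTransition ((4 - ‖x‖ ^ 2 / R ^ 2) / 3)

lemma cutoff_contDiff (R : ℝ) : ContDiff ℝ 2 (cutoff R) :=
  Real.smoothTransition.contDiff.comp
    ((contDiff_const.sub ((contDiff_norm_sq ℝ).div_const _)).div_const _)

lemma cutoff_one {R : ℝ} (hR : 0 < R) {x : E3} (hx : ‖x‖ ≤ R) : cutoff R x = 1 := by
  apply Real.smoothTransition.one_of_one_le
  have h1 : ‖x‖ ^ 2 ≤ R ^ 2 := by nlinarith [norm_nonneg x]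
  have h2 : ‖x‖ ^ 2 / R ^ 2 ≤ 1 := by rw [div_le_one (by positivity)]; exact h1
  linarith

lemma cutoff_zero {R : ℝ} (hR : 0 < R) {x : E3} (hx : 2 * R ≤ ‖x‖) : cutoff R x = 0 := by
  apply Real.smoothTransition.zero_of_nonpos
  have h1 : 4 * R ^ 2 ≤ ‖x‖ ^ 2 := by nlinarith
  have h2 : (4:ℝ) ≤ ‖x‖ ^ 2 / R ^ 2 := by rw [le_div_iff₀ (by positivity)]; linarith
  linarith

lemma cutoff_nonneg (R : ℝ) (x : E3) : 0 ≤ cutoff R x := Real.smoothTransition.nonneg _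
lemma cutoff_le_one (R : ℝ) (x : E3) : cutoff R x ≤ 1 := Real.smoothTransition.le_one _

lemma cutoff_hasCompactSupport {R : ℝ} (hR : 0 < R) : HasCompactSupport (cutoff R) := by
  apply HasCompactSupport.intro (isCompact_closedBall (0:E3) (2*R))
  intro x hx
  simp only [Metric.mem_closedBall, dist_zero_right, not_le] at hx
  exact cutoff_zero hR (le_of_lt hx)

lemma cutoff_hasFDerivAt {R : ℝ} (hR : 0 < R) (x : E3) :
    HasFDerivAt (cutoff R)
      ((deriv Real.smoothTransition ((4 - ‖x‖ ^ 2 / R ^ 2) / 3)) •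
        ((-(2 / (3 * R ^ 2))) • innerSL ℝ x)) x := by
  have h1 : HasFDerivAt (fun y : E3 => ‖y‖ ^ 2) ((2:ℕ) • innerSL ℝ x) x :=
    (hasStrictFDerivAt_norm_sq x).hasFDerivAt
  have h2 : HasFDerivAt (fun y : E3 => 4/3 + (-(1 / (3 * R ^ 2))) * ‖y‖ ^ 2)
      ((-(1 / (3 * R ^ 2))) • ((2:ℕ) • innerSL ℝ x)) x := (h1.const_mul _).const_add _
  have heq : (fun y : E3 => (4 - ‖y‖ ^ 2 / R ^ 2) / 3)
      = fun y : E3 => 4/3 + (-(1 / (3 * R ^ 2))) * ‖y‖ ^ 2 := by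
    funext y
    have : R ^ 2 ≠ 0 := by positivity
    field_simp
    ring
  have h2' : HasFDerivAt (fun y : E3 => (4 - ‖y‖ ^ 2 / R ^ 2) / 3)
      ((-(2 / (3 * R ^ 2))) • innerSL ℝ x) x := by
    rw [heq]
    convert h2 using 1
    ext v
    simp [smul_eq_mul]
    ring
  have h3 : HasDerivAt Real.smoothTransition
      (deriv Real.smoothTransition ((4 - ‖x‖ ^ 2 / R ^ 2) / 3)) ((4 - ‖x‖ ^ 2 / R ^ 2) / 3) :=
    ((Real.smoothTransition.contDiff (n := 1)).differentiable one_ne_zero _).hasDerivAt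
  exact h3.comp_hasFDerivAt x h2'

lemma cutoff_pderiv_bound : ∃ M : ℝ, 0 < M ∧ ∀ (R : ℝ), 0 < R → ∀ (x : E3) (i : Fin 3),
    |pderiv3 i (cutoff R) x| ≤ M / R := by
  obtain ⟨M₀, hM₀, hM₀b⟩ := smoothTransition_deriv_bound
  refine ⟨2 * M₀, by positivity, fun R hR x i => ?_⟩
  have hfd := cutoff_hasFDerivAt hR x
  have hpd : pderiv3 i (cutoff R) x
      = deriv Real.smoothTransition ((4 - ‖x‖ ^ 2 / R ^ 2) / 3)
        * ((-(2 / (3 * R ^ 2))) * (inner ℝ x (eVec i) : ℝ)) := by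
    rw [pderiv3, hfd.fderiv]
    simp [smul_eq_mul]
  rw [hpd]
  have hinner : |(inner ℝ x (eVec i) : ℝ)| ≤ ‖x‖ := by
    have := abs_real_inner_le_norm x (eVec i)
    have he : ‖eVec i‖ = 1 := by simp [eVec, EuclideanSpace.norm_single]
    rw [he, mul_one] at this; exact this
  by_cases hx : ‖x‖ ≤ 2 * R
  · have hb : |deriv Real.smoothTransition ((4 - ‖x‖ ^ 2 / R ^ 2) / 3)| ≤ M₀ := hM₀b _
    calc |deriv Real.smoothTransition ((4 - ‖x‖ ^ 2 / R ^ 2) / 3)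
        * ((-(2 / (3 * R ^ 2))) * (inner ℝ x (eVec i) : ℝ))|
        = |deriv Real.smoothTransition ((4 - ‖x‖ ^ 2 / R ^ 2) / 3)|
          * ((2 / (3 * R ^ 2)) * |(inner ℝ x (eVec i) : ℝ)|) := by
          rw [abs_mul, abs_mul, abs_neg, abs_div,
            abs_of_pos (show (0:ℝ) < 3 * R ^ 2 by positivity)]
          norm_num
      _ ≤ M₀ * ((2 / (3 * R ^ 2)) * (2 * R)) := by
          apply mul_le_mul hb _ (by positivity) (le_of_lt hM₀)
          gcongr
          exact hinner.trans hx
      _ ≤ 2 * M₀ / R := by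
          have he : M₀ * (2 / (3 * R ^ 2) * (2 * R)) = (4 / 3) * M₀ / R := by
            field_simp; ring
          rw [he]
          gcongr
          linarith
  · push_neg at hx
    have harg : (4 - ‖x‖ ^ 2 / R ^ 2) / 3 < 0 := by
      have : 4 * R ^ 2 < ‖x‖ ^ 2 := by nlinarith
      have : (4:ℝ) < ‖x‖ ^ 2 / R ^ 2 := by rw [lt_div_iff₀ (by positivity)]; linarith
      linarith
    have hder : deriv Real.smoothTransition ((4 - ‖x‖ ^ 2 / R ^ 2) / 3) = 0 := by
      have : Real.smoothTransition =ᶠ[nhds ((4 - ‖x‖ ^ 2 / R ^ 2) / 3)] fun _ => 0 := by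
        filter_upwards [Iio_mem_nhds harg] with y hy
        exact Real.smoothTransition.zero_of_nonpos (le_of_lt hy)
      rw [this.deriv_eq]; simp
    rw [hder]; simp; positivity


lemma ratio_const {Q ξ : E3 → ℝ} (hQ : ContDiff ℝ 2 Q) (hξ : ContDiff ℝ 2 ξ)
    (hQpos : ∀ x, 0 < Q x) (hξ2 : Integrable (fun x => ξ x ^ 2) volume)
    (hF : ∀ x, Q x * lap ξ x = ξ x * lap Q x) :
    ∀ x : E3, ξ x * Q 0 = ξ 0 * Q x := by
  obtain ⟨M, hM, hMb⟩ := cutoff_pderiv_bound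
  set K : ℝ := 12 * M ^ 2 * (∫ x : E3, ξ x ^ 2) with hKdef
  have hξint : 0 ≤ ∫ x : E3, ξ x ^ 2 := integral_nonneg (fun x => sq_nonneg _)
  have hK : 0 ≤ K := by positivity
  set G : E3 → ℝ := fun x => (∑ i : Fin 3, Xf Q ξ i x ^ 2) / Q x ^ 2 with hGdef
  have hGcont : Continuous G := by
    apply Continuous.div
    · exact continuous_finset_sum _ fun i _ => ((Xf_contDiff hQ hξ i).continuous).pow 2
    · exact (hQ.continuous).pow 2
    · exact fun x => pow_ne_zero 2 (hQpos x).ne'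
  have hGnonneg : ∀ x, 0 ≤ G x := fun x =>
    div_nonneg (Finset.sum_nonneg fun i _ => sq_nonneg _) (sq_nonneg _)
  -- main Caccioppoli estimate
  have main : ∀ R : ℝ, 0 < R →
      ∫ x : E3, (cutoff R x) ^ 2 * G x ≤ K / R ^ 2 := by
    intro R hR
    have hccd : ContDiff ℝ 2 (cutoff R) := cutoff_contDiff R
    have hccs : HasCompactSupport (cutoff R) := cutoff_hasCompactSupport hR
    set c : E3 → ℝ := cutoff R with hcdef
    set g : Fin 3 → E3 → ℝ := fun i y => c y * c y * (ξ y / Q y) * Xf Q ξ i y with hgdef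
    have hg1 : ∀ i, ContDiff ℝ 1 (g i) := fun i =>
      (((hccd.of_le one_le_two).mul (hccd.of_le one_le_two)).mul
        (w_contDiff hQ hξ hQpos)).mul (Xf_contDiff hQ hξ i)
    have hgcs : ∀ i, HasCompactSupport (g i) := by
      intro i
      apply HasCompactSupport.intro (isCompact_closedBall (0:E3) (2*R))
      intro x hx
      simp only [Metric.mem_closedBall, dist_zero_right, not_le] at hx
      have hc0 : c x = 0 := cutoff_zero hR hx.le
      simp [hgdef, hc0]
    have hzero : ∀ i, ∫ x : E3, fderiv ℝ (g i) x (eVec i) = 0 := fun i =>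
      integral_pderiv_eq_zero (hg1 i) (hgcs i) (eVec i)
    have hInt : ∀ i : Fin 3, Integrable (fun x => fderiv ℝ (g i) x (eVec i)) volume := fun i =>
      (((hg1 i).continuous_fderiv one_ne_zero).clm_apply
        continuous_const).integrable_of_hasCompactSupport ((hgcs i).fderiv_apply ℝ (eVec i))
    have hsum0 : ∫ x : E3, ∑ i : Fin 3, fderiv ℝ (g i) x (eVec i) = 0 := by
      rw [integral_finset_sum _ (fun i _ => hInt i)]
      simp [hzero]
    have hPC : ∀ x : E3, ∑ i : Fin 3, fderiv ℝ (g i) x (eVec i)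
        = ∑ i : Fin 3, ((c x * Xf Q ξ i x / Q x) ^ 2
            + 2 * (c x * Xf Q ξ i x / Q x) * (ξ x * fderiv ℝ c x (eVec i))) := by
      intro x
      rw [Finset.sum_congr rfl (fun i _ => pd_g_eq hQ hξ hQpos hccd i x)]
      rw [Finset.sum_add_distrib]
      have hz : (∑ i : Fin 3, c x * c x * (ξ x / Q x)
          * (Q x * fderiv ℝ (pderiv3 i ξ) x (eVec i)
             - ξ x * fderiv ℝ (pderiv3 i Q) x (eVec i)))
          = c x * c x * (ξ x / Q x) * (Q x * lap ξ x - ξ x * lap Q x) := by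
        rw [← Finset.mul_sum]
        congr 1
        rw [Finset.sum_sub_distrib, ← Finset.mul_sum, ← Finset.mul_sum]
        rfl
      rw [hz, hF x, sub_self, mul_zero, add_zero]
    -- pointwise lower bound
    have hptw : ∀ x : E3,
        ((c x) ^ 2 * G x) / 2 - (2 * ∑ i : Fin 3, (fderiv ℝ c x (eVec i)) ^ 2) * ξ x ^ 2
          ≤ ∑ i : Fin 3, fderiv ℝ (g i) x (eVec i) := by
      intro x
      rw [hPC x]
      have hPsum : (c x) ^ 2 * G x = ∑ i : Fin 3, (c x * Xf Q ξ i x / Q x) ^ 2 := by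
        have he : ∀ i : Fin 3, (c x * Xf Q ξ i x / Q x) ^ 2
            = (c x) ^ 2 * (Xf Q ξ i x ^ 2 / Q x ^ 2) := by
          intro i; rw [mul_div_assoc, mul_pow, div_pow]
        rw [Finset.sum_congr rfl (fun i _ => he i), ← Finset.mul_sum, ← Finset.sum_div]
      rw [hPsum, Finset.sum_div, Finset.mul_sum, Finset.sum_mul, ← Finset.sum_sub_distrib]
      apply Finset.sum_le_sum
      intro i _
      nlinarith [sq_nonneg (c x * Xf Q ξ i x / Q x + 2 * (ξ x * fderiv ℝ c x (eVec i))),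
        sq_nonneg (ξ x * fderiv ℝ c x (eVec i))]
    -- integrability
    have hPcont : Continuous (fun x => (c x) ^ 2 * G x) :=
      ((hccd.continuous).pow 2).mul hGcont
    have hPcs : HasCompactSupport (fun x => (c x) ^ 2 * G x) := by
      apply HasCompactSupport.intro (isCompact_closedBall (0:E3) (2*R))
      intro x hx
      simp only [Metric.mem_closedBall, dist_zero_right, not_le] at hx
      have hc0 : c x = 0 := cutoff_zero hR hx.le
      simp [hc0]
    have hPint : Integrable (fun x => (c x) ^ 2 * G x) volume :=
      hPcont.integrable_of_hasCompactSupport hPcs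
    have hdcont : Continuous (fun x => 2 * ∑ i : Fin 3, (fderiv ℝ c x (eVec i)) ^ 2) := by
      apply continuous_const.mul
      exact continuous_finset_sum _ fun i _ =>
        (((hccd.continuous_fderiv two_ne_zero).clm_apply continuous_const).pow 2)
    have hdbound : ∀ x : E3, ‖2 * ∑ i : Fin 3, (fderiv ℝ c x (eVec i)) ^ 2‖ ≤ 6 * M ^ 2 / R ^ 2 := by
      intro x
      have hb : ∀ i : Fin 3, (fderiv ℝ c x (eVec i)) ^ 2 ≤ (M / R) ^ 2 := by
        intro i
        have h1 : |fderiv ℝ c x (eVec i)| ≤ M / R := hMb R hR x i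
        nlinarith [abs_nonneg (fderiv ℝ c x (eVec i)), sq_abs (fderiv ℝ c x (eVec i))]
      have h2 : ∑ i : Fin 3, (fderiv ℝ c x (eVec i)) ^ 2 ≤ 3 * (M / R) ^ 2 := by
        calc ∑ i : Fin 3, (fderiv ℝ c x (eVec i)) ^ 2 ≤ ∑ _i : Fin 3, (M / R) ^ 2 :=
              Finset.sum_le_sum fun i _ => hb i
          _ = 3 * (M / R) ^ 2 := by
              rw [Finset.sum_const, Finset.card_univ, Fintype.card_fin, nsmul_eq_mul]
              norm_num
      have h3 : (0:ℝ) ≤ ∑ i : Fin 3, (fderiv ℝ c x (eVec i)) ^ 2 :=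
        Finset.sum_nonneg fun i _ => sq_nonneg _
      rw [Real.norm_eq_abs, abs_of_nonneg (by positivity)]
      have he : 6 * M ^ 2 / R ^ 2 = 2 * (3 * (M / R) ^ 2) := by
        rw [div_pow]; ring
      linarith
    have hTint : Integrable
        (fun x => (2 * ∑ i : Fin 3, (fderiv ℝ c x (eVec i)) ^ 2) * ξ x ^ 2) volume :=
      hξ2.bdd_mul hdcont.aestronglyMeasurable (Filter.Eventually.of_forall hdbound)
    -- integrate the pointwise bound
    have hIneq : (∫ x : E3, (c x) ^ 2 * G x) / 2 - ∫ x : E3,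
        (2 * ∑ i : Fin 3, (fderiv ℝ c x (eVec i)) ^ 2) * ξ x ^ 2 ≤ 0 := by
      have h1 : ∫ x : E3, (((c x) ^ 2 * G x) / 2
          - (2 * ∑ i : Fin 3, (fderiv ℝ c x (eVec i)) ^ 2) * ξ x ^ 2)
          ≤ ∫ x : E3, ∑ i : Fin 3, fderiv ℝ (g i) x (eVec i) :=
        integral_mono ((hPint.div_const 2).sub hTint)
          (integrable_finset_sum _ (fun i _ => hInt i)) hptw
      rw [hsum0] at h1
      rw [integral_sub (hPint.div_const 2) hTint, integral_div] at h1
      exact h1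
    have hTbound : ∫ x : E3, (2 * ∑ i : Fin 3, (fderiv ℝ c x (eVec i)) ^ 2) * ξ x ^ 2
        ≤ (6 * M ^ 2 / R ^ 2) * ∫ x : E3, ξ x ^ 2 := by
      rw [← integral_const_mul]
      apply integral_mono hTint (hξ2.const_mul _)
      intro x
      have := hdbound x
      rw [Real.norm_eq_abs] at this
      have h2 := (abs_le.mp this).2
      exact mul_le_mul_of_nonneg_right h2 (sq_nonneg _)
    have : (∫ x : E3, (c x) ^ 2 * G x) ≤ 2 * ((6 * M ^ 2 / R ^ 2) * ∫ x : E3, ξ x ^ 2) := by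
      linarith
    calc ∫ x : E3, (c x) ^ 2 * G x ≤ 2 * ((6 * M ^ 2 / R ^ 2) * ∫ x : E3, ξ x ^ 2) := this
      _ = K / R ^ 2 := by rw [hKdef]; field_simp; ring
  -- G vanishes identically
  have hPint : ∀ R : ℝ, 0 < R → Integrable (fun x => (cutoff R x) ^ 2 * G x) volume := by
    intro R hR
    have hPcont : Continuous (fun x => (cutoff R x) ^ 2 * G x) :=
      (((cutoff_contDiff R).continuous).pow 2).mul hGcont
    have hPcs : HasCompactSupport (fun x => (cutoff R x) ^ 2 * G x) := by
      apply HasCompactSupport.intro (isCompact_closedBall (0:E3) (2*R))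
      intro x hx
      simp only [Metric.mem_closedBall, dist_zero_right, not_le] at hx
      have hc0 : cutoff R x = 0 := cutoff_zero hR hx.le
      simp [hc0]
    exact hPcont.integrable_of_hasCompactSupport hPcs
  have hGzero : ∀ x : E3, G x = 0 := by
    intro x₀
    by_contra hne
    have hpos : 0 < G x₀ := lt_of_le_of_ne (hGnonneg x₀) (Ne.symm hne)
    obtain ⟨δ, hδ, hball⟩ : ∃ δ > 0, ∀ y : E3, dist y x₀ ≤ δ → G x₀ / 2 ≤ G y := by
      obtain ⟨δ', hδ', h⟩ := Metric.continuousAt_iff.mp hGcont.continuousAt (G x₀ / 2)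
        (by linarith)
      refine ⟨δ' / 2, by linarith, fun y hy => ?_⟩
      have h2 := h (show dist y x₀ < δ' from lt_of_le_of_lt hy (by linarith))
      rw [Real.dist_eq] at h2
      have habs := (abs_lt.mp h2).1
      linarith [habs]
    set v : ℝ := (volume (Metric.closedBall x₀ δ)).toReal with hvdef
    have hv : 0 < v := by
      rw [hvdef]
      exact ENNReal.toReal_pos (Metric.measure_closedBall_pos volume x₀ hδ).ne'
        (measure_closedBall_lt_top).ne
    have hstep : ∀ R : ℝ, ‖x₀‖ + δ ≤ R → 0 < R → G x₀ / 2 * v ≤ K / R ^ 2 := by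
      intro R hRlarge hRpos
      have h1 : G x₀ / 2 * v ≤ ∫ x in Metric.closedBall x₀ δ, (cutoff R x) ^ 2 * G x := by
        apply setIntegral_ge_of_const_le_real measurableSet_closedBall
          (measure_closedBall_lt_top).ne
        · intro y hy
          have hy' : dist y x₀ ≤ δ := Metric.mem_closedBall.mp hy
          have hny : ‖y‖ ≤ R := by
            have h3 : ‖y‖ ≤ ‖x₀‖ + ‖y - x₀‖ := norm_le_norm_add_norm_sub' y x₀
            rw [← dist_eq_norm] at h3
            linarith
          rw [cutoff_one hRpos hny]
          have := hball y hy'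
          linarith
        · exact (hPint R hRpos).integrableOn
      have h2 : ∫ x in Metric.closedBall x₀ δ, (cutoff R x) ^ 2 * G x
          ≤ ∫ x : E3, (cutoff R x) ^ 2 * G x :=
        setIntegral_le_integral (hPint R hRpos)
          (Filter.Eventually.of_forall fun x => mul_nonneg (sq_nonneg _) (hGnonneg x))
      linarith [main R hRpos, h1, h2]
    have hδv : 0 < G x₀ / 2 * v := by positivity
    set R₀ : ℝ := max (‖x₀‖ + δ) (Real.sqrt (K / (G x₀ / 2 * v)) + 1) with hR₀def
    have hR₀1 : ‖x₀‖ + δ ≤ R₀ := le_max_left _ _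
    have hR₀pos : 0 < R₀ :=
      lt_of_lt_of_le (by positivity) (le_max_right _ _)
    have hfin := hstep R₀ hR₀1 hR₀pos
    have hsq : Real.sqrt (K / (G x₀ / 2 * v)) < R₀ :=
      lt_of_lt_of_le (lt_add_one _) (le_max_right _ _)
    have hlt : K / (G x₀ / 2 * v) < R₀ ^ 2 := by
      nlinarith [Real.sq_sqrt (show (0:ℝ) ≤ K / (G x₀ / 2 * v) by positivity),
        Real.sqrt_nonneg (K / (G x₀ / 2 * v))]
    have hKlt : K / R₀ ^ 2 < G x₀ / 2 * v := by
      rw [div_lt_iff₀ (by positivity)]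
      have := (div_lt_iff₀ hδv).mp hlt
      linarith
    linarith
  -- each X i vanishes
  have hX0 : ∀ (i : Fin 3) (x : E3), Xf Q ξ i x = 0 := by
    intro i x
    have h := hGzero x
    have hQ2 : Q x ^ 2 ≠ 0 := pow_ne_zero 2 (hQpos x).ne'
    have hsum : ∑ j : Fin 3, Xf Q ξ j x ^ 2 = 0 := by
      rcases div_eq_zero_iff.mp h with h' | h'
      · exact h'
      · exact absurd h' hQ2
    have h2 := (Finset.sum_eq_zero_iff_of_nonneg (fun j _ => sq_nonneg _)).mp hsum i
      (Finset.mem_univ i)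
    exact pow_eq_zero_iff two_ne_zero |>.mp h2
  -- the ratio is constant
  have hwd : Differentiable ℝ (fun y => ξ y / Q y) :=
    (w_contDiff hQ hξ hQpos).differentiable one_ne_zero
  have hw0 : ∀ x : E3, fderiv ℝ (fun y => ξ y / Q y) x = 0 := by
    intro x
    apply ContinuousLinearMap.ext
    intro u
    have hu : u = ∑ i : Fin 3, u i • eVec i := by
      ext j
      rw [WithLp.ofLp_sum, Finset.sum_apply]
      simp [eVec, EuclideanSpace.single_apply]
    rw [hu, map_sum]
    have hzero : ∀ i : Fin 3, fderiv ℝ (fun y => ξ y / Q y) x (eVec i) = 0 := by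
      intro i
      rw [pd_w hQ hξ hQpos i x, hX0 i x]
      simp
    simp [ContinuousLinearMap.map_smul, hzero]
  intro x
  have hconst := is_const_of_fderiv_eq_zero hwd hw0 x 0
  have hdd := (div_eq_div_iff (hQpos x).ne' (hQpos 0).ne').mp hconst
  linarith [hdd]


/-- The kernel of `L₋,μ` is spanned by `Q_μ`. -/
theorem Lm_kernel (μ : ℝ) (Qm : E3 → ℝ) (hμ : 0 < μ) (hQm : groundState μ Qm)
    (ξ : E3 → ℝ) (hξ : H2R ξ)
    (heq : ∀ᵐ x ∂(volume : Measure E3), Lm μ Qm ξ x = 0) :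
    ∃ c : ℝ, ∀ᵐ x ∂(volume : Measure E3), ξ x = c * Qm x := by
  obtain ⟨hQsm, hQpos, _hrad, _hdec, hQeq⟩ := hQm
  obtain ⟨hξC2, hξL2, _, _⟩ := hξ
  have hQ2 : ContDiff ℝ 2 Qm := contDiff_infty.mp hQsm 2
  have hξ2int : Integrable (fun x => ξ x ^ 2) volume := hξL2.integrable_sq
  have hlapcont : ∀ f : E3 → ℝ, ContDiff ℝ 2 f → Continuous (fun x => lap f x) := by
    intro f hf
    simp only [lap]
    apply continuous_finset_sum
    intro i _
    have h1 : ContDiff ℝ 1 (fun y => fderiv ℝ f y (eVec i)) :=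
      (hf.fderiv_right (m := 1) (by norm_num)).clm_apply contDiff_const
    exact (h1.continuous_fderiv one_ne_zero).clm_apply continuous_const
  have hFcont : Continuous (fun x => Qm x * lap ξ x - ξ x * lap Qm x) :=
    ((hQ2.continuous).mul (hlapcont ξ hξC2)).sub ((hξC2.continuous).mul (hlapcont Qm hQ2))
  have hFae : (fun x => Qm x * lap ξ x - ξ x * lap Qm x) =ᵐ[(volume : Measure E3)]
      (fun _ => 0) := by
    filter_upwards [heq] with x hx
    have hQe := hQeq x
    have hlξ : lap ξ x = ξ x - Qm x ^ ((4:ℝ)/3) * ξ x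
        - μ * Afun (fun y => Qm y ^ 2) x * ξ x := by
      simp only [Lm] at hx
      linarith
    have hlQ : lap Qm x = Qm x - Qm x ^ ((7:ℝ)/3)
        - μ * Afun (fun y => Qm y ^ 2) x * Qm x := by
      linarith
    have hrpow : Qm x ^ ((7:ℝ)/3) = Qm x ^ ((4:ℝ)/3) * Qm x := by
      have h := Real.rpow_add (hQpos x) ((4:ℝ)/3) 1
      rw [Real.rpow_one] at h
      rw [← h]
      norm_num
    rw [hlξ, hlQ, hrpow]
    ring
  have hFall : ∀ x : E3, Qm x * lap ξ x = ξ x * lap Qm x := by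
    have h := (Continuous.ae_eq_iff_eq (volume : Measure E3) hFcont continuous_const).mp hFae
    intro x
    have hx := congrFun h x
    linarith
  have hr := ratio_const hQ2 hξC2 hQpos hξ2int hFall
  refine ⟨ξ 0 / Qm 0, Filter.Eventually.of_forall fun x => ?_⟩
  have h := hr x
  rw [div_mul_eq_mul_div, eq_div_iff (hQpos 0).ne']
  linarith


end
end

section
/- Let μ < 0 and δ > 0. Set β = (1 + δ/‖Q‖_{L²})^{−2/3} ∈ (0,1) and for α > 0 define Q_{α,β}(x) = α^{3/2} Q(αβ x). Then: (i) ‖Q_{α,β}‖_{L²} = ‖Q‖_{L²} + δ; (ii) E_μ(Q_{α,β}) = α² β^{−3} ( (β² − 1)(3/10) ∫ Q^{10/3} − (μ/4) β^{−1} ∫∫ Q(x)² Q(y)² / |x−y|² dx dy ); (iii) there exists μ₀ > 0, depending only on δ and Q, such that if −μ₀ < μ < 0 then E_μ(Q_{α,β}) < 0 for every α > 0. -/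
open MeasureTheory

noncomputable section

lemma decay_bound (Q : E3 → ℝ) (hcont : Continuous Q) (hpos : ∀ x, 0 < Q x)
    (hdec : decayLike Q) :
    ∃ K > 0, ∀ x : E3, Q x ≤ K * (1 + ‖x‖) ^ (-(2:ℝ)) := by
  obtain ⟨C, hC, htail⟩ := hdec
  obtain ⟨x₀, -, hx₀⟩ := (isCompact_closedBall (0 : E3) 1).exists_isMaxOn
    ⟨0, by simp⟩ hcont.continuousOn
  set M := Q x₀ with hM
  have hMpos : 0 < M := hpos x₀
  refine ⟨4 * max C M, by positivity, fun x => ?_⟩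
  have h1 : (0:ℝ) < 1 + ‖x‖ := by positivity
  rcases le_or_gt (‖x‖) 1 with h | h
  · have hQM : Q x ≤ M := hx₀ (by simpa [Metric.mem_closedBall] using h)
    have hb : (1 + ‖x‖) ^ (-(2:ℝ)) = ((1 + ‖x‖)^2)⁻¹ := by
      rw [← Real.rpow_natCast (1 + ‖x‖) 2, ← Real.rpow_neg h1.le]; norm_num
    rw [hb]
    have h4 : (1 + ‖x‖)^2 ≤ 4 := by nlinarith [norm_nonneg x]
    have : (4:ℝ)⁻¹ ≤ ((1 + ‖x‖)^2)⁻¹ := by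
      apply inv_anti₀ (by positivity) h4
    calc Q x ≤ M := hQM
      _ = 4 * M * (4:ℝ)⁻¹ := by ring
      _ ≤ 4 * max C M * ((1 + ‖x‖)^2)⁻¹ := by
          apply mul_le_mul (by nlinarith [le_max_right C M]) this (by positivity) (by positivity)
  · have htl := (htail x h.le).1
    have hQx : Q x ≤ C * Real.exp (-‖x‖) / ‖x‖ := (le_abs_self _).trans htl
    have hb : (1 + ‖x‖) ^ (-(2:ℝ)) = ((1 + ‖x‖)^2)⁻¹ := by
      rw [← Real.rpow_natCast (1 + ‖x‖) 2, ← Real.rpow_neg h1.le]; norm_num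
    rw [hb]
    have hr : (0:ℝ) < ‖x‖ := by linarith
    have hexp : ‖x‖ ≤ Real.exp ‖x‖ := by linarith [Real.add_one_le_exp ‖x‖]
    have hexp' : Real.exp (-‖x‖) * ‖x‖ ≤ 1 := by
      rw [Real.exp_neg, inv_mul_le_iff₀ (Real.exp_pos _)]; simpa using hexp
    have h4sq : (1 + ‖x‖)^2 ≤ 4 * ‖x‖^2 := by nlinarith
    have e2 : Real.exp (-‖x‖) * (1 + ‖x‖)^2 ≤ Real.exp (-‖x‖) * (4 * ‖x‖^2) :=
      mul_le_mul_of_nonneg_left h4sq (Real.exp_pos _).le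
    have e3 : Real.exp (-‖x‖) * (4 * ‖x‖^2) ≤ 4 * ‖x‖ := by nlinarith [hexp', hr]
    have hE : Real.exp (-‖x‖) * (1 + ‖x‖)^2 ≤ 4 * ‖x‖ := le_trans e2 e3
    have final : C * Real.exp (-‖x‖) / ‖x‖ ≤ 4 * max C M / (1 + ‖x‖)^2 := by
      rw [div_le_div_iff₀ hr (by positivity)]
      calc C * Real.exp (-‖x‖) * (1 + ‖x‖)^2 = C * (Real.exp (-‖x‖) * (1 + ‖x‖)^2) := by ring
        _ ≤ C * (4 * ‖x‖) := mul_le_mul_of_nonneg_left hE hC.le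
        _ ≤ 4 * max C M * ‖x‖ := by nlinarith [le_max_left C M, hr]
    calc Q x ≤ C * Real.exp (-‖x‖) / ‖x‖ := hQx
      _ ≤ 4 * max C M / (1 + ‖x‖)^2 := final
      _ = 4 * max C M * ((1 + ‖x‖)^2)⁻¹ := by rw [div_eq_mul_inv]

lemma rpow_bound_sq {r K : ℝ} (hr : 0 ≤ r) (hK : 0 ≤ K) :
    (K * (1 + r) ^ (-(2:ℝ)))^2 = K^2 * (1 + r) ^ (-(4:ℝ)) := by
  have h1 : (0:ℝ) < 1 + r := by linarith
  rw [mul_pow, ← Real.rpow_natCast ((1+r) ^ (-(2:ℝ))) 2, ← Real.rpow_mul h1.le]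
  norm_num

lemma integrable_sq_of_decay (Q : E3 → ℝ) (hcont : Continuous Q) (hpos : ∀ x, 0 < Q x)
    (hdec : decayLike Q) : Integrable (fun x : E3 => Q x ^ 2) := by
  obtain ⟨K, hK, hb⟩ := decay_bound Q hcont hpos hdec
  have hint : Integrable (fun x : E3 => K^2 * (1 + ‖x‖) ^ (-(4:ℝ))) :=
    (integrable_one_add_norm (E := E3) (r := 4)
      (by simp [finrank_euclideanSpace_fin]; norm_num)).const_mul _
  apply hint.mono' ((hcont.pow 2).aestronglyMeasurable)
  filter_upwards with x
  rw [Real.norm_eq_abs, abs_of_nonneg (sq_nonneg _)]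
  calc Q x ^ 2 ≤ (K * (1 + ‖x‖) ^ (-(2:ℝ)))^2 := by
        apply pow_le_pow_left₀ (hpos x).le (hb x)
    _ = K^2 * (1 + ‖x‖) ^ (-(4:ℝ)) := rpow_bound_sq (norm_nonneg x) hK.le

lemma integral_sq_pos (Q : E3 → ℝ) (hcont : Continuous Q) (hpos : ∀ x, 0 < Q x)
    (hdec : decayLike Q) : 0 < ∫ x : E3, Q x ^ 2 := by
  refine (integral_pos_iff_support_of_nonneg (fun x => sq_nonneg _)
    (integrable_sq_of_decay Q hcont hpos hdec)).2 ?_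
  have : Function.support (fun x : E3 => Q x ^ 2) = Set.univ := by
    ext x; simp [Function.support, pow_ne_zero_iff, (hpos x).ne']
  rw [this]
  exact MeasureTheory.Measure.measure_univ_pos.2 (NeZero.ne _)

lemma integrable_p103_of_decay (Q : E3 → ℝ) (hcont : Continuous Q) (hpos : ∀ x, 0 < Q x)
    (hdec : decayLike Q) : Integrable (fun x : E3 => Q x ^ ((10:ℝ)/3)) := by
  obtain ⟨K, hK, hb⟩ := decay_bound Q hcont hpos hdec
  have h3 : ((Module.finrank ℝ E3 : ℝ)) < (20:ℝ)/3 := by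
    rw [finrank_euclideanSpace_fin]; norm_num
  have hint : Integrable (fun x : E3 => K ^ ((10:ℝ)/3) * (1 + ‖x‖) ^ (-((20:ℝ)/3))) :=
    (integrable_one_add_norm (E := E3) h3).const_mul _
  apply hint.mono' (hcont.rpow_const (fun x => Or.inl (hpos x).ne')).aestronglyMeasurable
  filter_upwards with x
  have h1 : (0:ℝ) < 1 + ‖x‖ := by positivity
  rw [Real.norm_eq_abs, abs_of_nonneg (Real.rpow_nonneg (hpos x).le _)]
  calc Q x ^ ((10:ℝ)/3) ≤ (K * (1 + ‖x‖) ^ (-(2:ℝ))) ^ ((10:ℝ)/3) := by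
        apply Real.rpow_le_rpow (hpos x).le (hb x) (by norm_num)
    _ = K ^ ((10:ℝ)/3) * (1 + ‖x‖) ^ (-((20:ℝ)/3)) := by
        rw [Real.mul_rpow hK.le (Real.rpow_nonneg h1.le _), ← Real.rpow_mul h1.le]
        norm_num

lemma int_smul (f : E3 → ℝ) {c : ℝ} (hc : 0 < c) :
    ∫ x : E3, f (c • x) = (c ^ 3)⁻¹ * ∫ x : E3, f x := by
  rw [MeasureTheory.Measure.integral_comp_smul_of_nonneg volume f c (hR := hc.le)]
  simp [finrank_euclideanSpace_fin, smul_eq_mul]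

lemma fderiv_scale (Q : E3 → ℝ) (hd : Differentiable ℝ Q) (a c : ℝ) (x : E3) :
    fderiv ℝ (fun y => a * Q (c • y)) x = (a * c) • fderiv ℝ Q (c • x) := by
  have h1 : HasFDerivAt (fun y : E3 => c • y) (c • ContinuousLinearMap.id ℝ E3) x :=
    (hasFDerivAt_id x).const_smul c
  have h2 : HasFDerivAt (fun y : E3 => Q (c • y))
      ((fderiv ℝ Q (c • x)).comp (c • ContinuousLinearMap.id ℝ E3)) x :=
    (hd (c • x)).hasFDerivAt.comp x h1
  have h3 := h2.const_mul a
  rw [h3.fderiv]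
  ext v
  simp [smul_smul, mul_comm, mul_assoc, mul_left_comm]

lemma mass_scale (Q : E3 → ℝ) {a c : ℝ} (hc : 0 < c) :
    ∫ x : E3, (a * Q (c • x)) ^ 2 = a ^ 2 * (c ^ 3)⁻¹ * ∫ x : E3, Q x ^ 2 := by
  simp_rw [mul_pow]
  rw [MeasureTheory.integral_const_mul, int_smul (fun y => Q y ^ 2) hc]
  ring

lemma gradSq_scale (Q : E3 → ℝ) (hd : Differentiable ℝ Q) {a c : ℝ} (ha : 0 < a) (hc : 0 < c) :
    gradSqR (fun x => a * Q (c • x)) = a ^ 2 * c ^ 2 * (c ^ 3)⁻¹ * gradSqR Q := by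
  unfold gradSqR
  have key : ∀ x : E3, ‖fderiv ℝ (fun y => a * Q (c • y)) x‖ ^ 2
      = a ^ 2 * c ^ 2 * (fun z => ‖fderiv ℝ Q z‖ ^ 2) (c • x) := by
    intro x
    rw [fderiv_scale Q hd a c x, norm_smul, Real.norm_eq_abs, mul_pow, sq_abs]
    ring
  simp_rw [key]
  rw [MeasureTheory.integral_const_mul, int_smul (fun z => ‖fderiv ℝ Q z‖ ^ 2) hc]
  ring

lemma p103_scale (Q : E3 → ℝ) (hQpos : ∀ x, 0 < Q x) {a c : ℝ} (ha : 0 < a) (hc : 0 < c) :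
    ∫ x : E3, |a * Q (c • x)| ^ ((10:ℝ)/3)
      = a ^ ((10:ℝ)/3) * (c ^ 3)⁻¹ * ∫ x : E3, Q x ^ ((10:ℝ)/3) := by
  have key : ∀ x : E3, |a * Q (c • x)| ^ ((10:ℝ)/3)
      = a ^ ((10:ℝ)/3) * (fun z => Q z ^ ((10:ℝ)/3)) (c • x) := by
    intro x
    rw [abs_of_pos (mul_pos ha (hQpos _)), Real.mul_rpow ha.le (hQpos _).le]
  simp_rw [key]
  rw [MeasureTheory.integral_const_mul, int_smul (fun z => Q z ^ ((10:ℝ)/3)) hc]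
  ring

lemma hartree_scale (Q : E3 → ℝ) {a c : ℝ} (hc : 0 < c) :
    hartreeR (fun x => a * Q (c • x)) = a ^ 4 * ((c ^ 3)⁻¹) ^ 2 * c ^ 2 * hartreeR Q := by
  unfold hartreeR
  have key : ∀ x y : E3, (a * Q (c • x)) ^ 2 * (a * Q (c • y)) ^ 2 / ‖x - y‖ ^ 2
      = a ^ 4 * c ^ 2 * (Q (c • x) ^ 2 * Q (c • y) ^ 2 / ‖c • x - c • y‖ ^ 2) := by
    intro x y
    have hn : ‖c • x - c • y‖ ^ 2 = c ^ 2 * ‖x - y‖ ^ 2 := by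
      rw [← smul_sub, norm_smul, Real.norm_eq_abs, mul_pow, sq_abs]
    rw [hn]
    rcases eq_or_ne x y with rfl | hxy
    · simp
    · have hD : ‖x - y‖ ^ 2 ≠ 0 := by
        simpa [sub_eq_zero] using hxy
      field_simp
  simp_rw [key]
  have inner : ∀ x : E3, (∫ y : E3, a ^ 4 * c ^ 2 *
        (Q (c • x) ^ 2 * Q (c • y) ^ 2 / ‖c • x - c • y‖ ^ 2))
      = a ^ 4 * c ^ 2 * (c ^ 3)⁻¹ *
        ((fun z => ∫ y : E3, Q z ^ 2 * Q y ^ 2 / ‖z - y‖ ^ 2) (c • x)) := by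
    intro x
    rw [MeasureTheory.integral_const_mul,
      int_smul (fun y => Q (c • x) ^ 2 * Q y ^ 2 / ‖c • x - y‖ ^ 2) hc]
    ring
  simp_rw [inner]
  rw [MeasureTheory.integral_const_mul,
    int_smul (fun z => ∫ y : E3, Q z ^ 2 * Q y ^ 2 / ‖z - y‖ ^ 2) hc]
  ring

lemma integral_p103_pos (Q : E3 → ℝ) (hcont : Continuous Q) (hpos : ∀ x, 0 < Q x)
    (hdec : decayLike Q) : 0 < ∫ x : E3, Q x ^ ((10:ℝ)/3) := by
  refine (integral_pos_iff_support_of_nonneg (fun x => Real.rpow_nonneg (hpos x).le _)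
    (integrable_p103_of_decay Q hcont hpos hdec)).2 ?_
  have : Function.support (fun x : E3 => Q x ^ ((10:ℝ)/3)) = Set.univ := by
    ext x; simp [Function.support, (Real.rpow_pos_of_pos (hpos x) _).ne']
  rw [this]
  exact MeasureTheory.Measure.measure_univ_pos.2 (NeZero.ne _)


/-- Rescaled profiles `Q_{α,β}(x) = α^{3/2}Q(αβx)` with `β = (1 + δ/‖Q‖_{L²})^{-2/3}`:
mass `‖Q‖_{L²} + δ`, explicit energy, and negative energy for `μ < 0` close to `0`. -/
theorem rescaled_negative_energy (δ : ℝ) (hδ : 0 < δ) (Q : E3 → ℝ) (hQ : isQ Q)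
    (hPoh : (1 / 2) * gradSqR Q = (3 / 10) * ∫ x : E3, Q x ^ ((10 : ℝ) / 3))
    (β : ℝ) (hβ : β = (1 + δ / L2normR Q) ^ (-(2 : ℝ) / 3)) :
    (0 < β ∧ β < 1) ∧
    (∀ α : ℝ, 0 < α →
      L2normR (fun x : E3 => α ^ ((3 : ℝ) / 2) * Q ((α * β) • x)) = L2normR Q + δ) ∧
    (∀ μ : ℝ, μ < 0 → ∀ α : ℝ, 0 < α →
      energyR μ (fun x : E3 => α ^ ((3 : ℝ) / 2) * Q ((α * β) • x)) =
        α ^ 2 * β ^ (-(3 : ℝ)) *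
          ((β ^ 2 - 1) * ((3 / 10) * ∫ x : E3, Q x ^ ((10 : ℝ) / 3))
            - (μ / 4) * β ^ (-(1 : ℝ)) * hartreeR Q)) ∧
    (∃ μ₀ > 0, ∀ μ : ℝ, -μ₀ < μ → μ < 0 → ∀ α : ℝ, 0 < α →
      energyR μ (fun x : E3 => α ^ ((3 : ℝ) / 2) * Q ((α * β) • x)) < 0) := by
  obtain ⟨hsm, hpos, hrad, hdec, hmono, heq⟩ := hQ
  have hQc : Continuous Q := hsm.continuous
  have hQd : Differentiable ℝ Q := hsm.differentiable (by simp)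
  have hS : 0 < ∫ x : E3, Q x ^ 2 := integral_sq_pos Q hQc hpos hdec
  have hP : 0 < ∫ x : E3, Q x ^ ((10:ℝ)/3) := integral_p103_pos Q hQc hpos hdec
  have hn : 0 < L2normR Q := Real.sqrt_pos.2 hS
  set n := L2normR Q with hndef
  set b := 1 + δ / n with hbdef
  have hb1 : 1 < b := by
    have := div_pos hδ hn
    rw [hbdef]; linarith
  have hbpos : 0 < b := by linarith
  have hβpos : 0 < β := hβ ▸ Real.rpow_pos_of_pos hbpos _
  have hβ1 : β < 1 := hβ ▸ Real.rpow_lt_one_of_one_lt_of_neg hb1 (by norm_num)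
  have hrpow2 : b ^ (-(2:ℝ)) = (b ^ 2)⁻¹ := by
    rw [Real.rpow_neg hbpos.le]
    congr 1
    rw [show ((2:ℝ)) = ((2:ℕ):ℝ) by norm_num, Real.rpow_natCast]
  have hβ3 : β ^ 3 = (b ^ 2)⁻¹ := by
    have h1 : ((b ^ (-(2:ℝ)/3)) : ℝ) ^ (3:ℕ) = b ^ ((-(2:ℝ)/3) * 3) := by
      rw [← Real.rpow_natCast (b ^ (-(2:ℝ)/3)) 3, ← Real.rpow_mul hbpos.le]
      norm_num
    rw [hβ, h1, show (-(2:ℝ)/3) * 3 = -(2:ℝ) by norm_num, hrpow2]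
  have hb1' : β ^ (-(1:ℝ)) = β⁻¹ := by
    rw [Real.rpow_neg hβpos.le, Real.rpow_one]
  have hb3' : β ^ (-(3:ℝ)) = (β ^ 3)⁻¹ := by
    rw [Real.rpow_neg hβpos.le]
    congr 1
    rw [show ((3:ℝ)) = ((3:ℕ):ℝ) by norm_num, Real.rpow_natCast]
  -- the energy identity, for all μ
  have hEn : ∀ μ : ℝ, ∀ α : ℝ, 0 < α →
      energyR μ (fun x : E3 => α ^ ((3 : ℝ) / 2) * Q ((α * β) • x)) =
        α ^ 2 * β ^ (-(3 : ℝ)) *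
          ((β ^ 2 - 1) * ((3 / 10) * ∫ x : E3, Q x ^ ((10 : ℝ) / 3))
            - (μ / 4) * β ^ (-(1 : ℝ)) * hartreeR Q) := by
    intro μ α hα
    have ha : 0 < α ^ ((3:ℝ)/2) := Real.rpow_pos_of_pos hα _
    have hc : 0 < α * β := mul_pos hα hβpos
    have ha2 : (α ^ ((3:ℝ)/2)) ^ 2 = α ^ 3 := by
      rw [← Real.rpow_natCast (α ^ ((3:ℝ)/2)) 2, ← Real.rpow_mul hα.le,
        ← Real.rpow_natCast α 3]
      norm_num
    have ha103 : (α ^ ((3:ℝ)/2)) ^ ((10:ℝ)/3) = α ^ 5 := by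
      rw [← Real.rpow_mul hα.le, ← Real.rpow_natCast α 5]
      norm_num
    have ha4 : (α ^ ((3:ℝ)/2)) ^ 4 = α ^ 6 := by
      rw [← Real.rpow_natCast (α ^ ((3:ℝ)/2)) 4, ← Real.rpow_mul hα.le,
        ← Real.rpow_natCast α 6]
      norm_num
    have hG : gradSqR Q = (3/5) * ∫ x : E3, Q x ^ ((10:ℝ)/3) := by linarith
    rw [energyR, gradSq_scale Q hQd ha hc, p103_scale Q hpos ha hc, hartree_scale Q hc,
      ha2, ha103, ha4, hG, hb3', hb1']
    field_simp
    ring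
  refine ⟨⟨hβpos, hβ1⟩, ?_, fun μ _ α hα => hEn μ α hα, ?_⟩
  · -- mass computation
    intro α hα
    have hc : 0 < α * β := mul_pos hα hβpos
    have ha2 : (α ^ ((3:ℝ)/2)) ^ 2 = α ^ 3 := by
      rw [← Real.rpow_natCast (α ^ ((3:ℝ)/2)) 2, ← Real.rpow_mul hα.le,
        ← Real.rpow_natCast α 3]
      norm_num
    have key : (α ^ ((3:ℝ)/2)) ^ 2 * (((α*β)) ^ 3)⁻¹ * (∫ x : E3, Q x ^ 2)
        = b ^ 2 * ∫ x : E3, Q x ^ 2 := by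
      rw [ha2, mul_pow, mul_inv, hβ3, inv_inv]
      field_simp
    rw [show L2normR (fun x : E3 => α ^ ((3 : ℝ) / 2) * Q ((α * β) • x))
        = Real.sqrt (∫ x : E3, (α ^ ((3 : ℝ) / 2) * Q ((α * β) • x)) ^ 2) from rfl,
      mass_scale Q hc, key, Real.sqrt_mul (sq_nonneg b), Real.sqrt_sq hbpos.le]
    have hsn : Real.sqrt (∫ x : E3, Q x ^ 2) = n := rfl
    rw [hsn, hbdef]
    field_simp
  · -- negative energy for small μ
    set P := ∫ x : E3, Q x ^ ((10:ℝ)/3) with hPdef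
    set H := hartreeR Q with hHdef
    have hH : 0 ≤ H := by
      apply MeasureTheory.integral_nonneg
      intro x
      apply MeasureTheory.integral_nonneg
      intro y
      positivity
    have hH1 : (0:ℝ) < H + 1 := by linarith
    have h1β : 0 < 1 - β ^ 2 := by nlinarith
    set μ₀ := (1 - β ^ 2) * ((3/10) * P) * β * 4 / (H + 1) with hμ₀def
    have hμ₀ : 0 < μ₀ := by
      apply div_pos _ hH1
      have : 0 < (3/10) * P := by linarith
      positivity
    refine ⟨μ₀, hμ₀, fun μ hμl hμ0 α hα => ?_⟩
    rw [hEn μ α hα]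
    apply mul_neg_of_pos_of_neg (mul_pos (pow_pos hα 2) (Real.rpow_pos_of_pos hβpos _))
    rw [hb1']
    have hβinv : 0 < β⁻¹ := inv_pos.2 hβpos
    have key1 : (-μ) * (β⁻¹ * H) ≤ μ₀ * (β⁻¹ * H) :=
      mul_le_mul_of_nonneg_right (by linarith) (mul_nonneg hβinv.le hH)
    have key2 : μ₀ * (β⁻¹ * H) < μ₀ * (β⁻¹ * (H + 1)) := by
      apply mul_lt_mul_of_pos_left _ hμ₀
      apply mul_lt_mul_of_pos_left (by linarith) hβinv
    have key3 : μ₀ * (β⁻¹ * (H + 1)) = 4 * ((1 - β ^ 2) * ((3/10) * P)) := by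
      rw [hμ₀def]
      field_simp
    clear_value P H μ₀
    have e : (-μ) * (β⁻¹ * H) < 4 * ((1 - β ^ 2) * ((3/10) * P)) := by
      calc (-μ) * (β⁻¹ * H) ≤ μ₀ * (β⁻¹ * H) := key1
        _ < μ₀ * (β⁻¹ * (H + 1)) := key2
        _ = 4 * ((1 - β ^ 2) * ((3/10) * P)) := key3
    linarith only [e]


end
end
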